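/- Let n ≥ 1 be an integer, U ⊆ ℝ⁷ an open set containing the origin, and β a 3-form on U that is n times continuously differentiable on U and closed on U. Define the 3-form P_n β : ℝ⁷ → Λ³ by P_n β(x) = ∑_{i=0}^{n} (1/i!) (D^i β(0))(x,…,x) (with i copies of x), where D^i β is the i-th iterated Fréchet derivative of β; equivalently, each component of P_n β is the n-th Taylor polynomial at the origin of the corresponding component of β. Then P_n β is closed on all of ℝ⁷. -/

import Mathlib

open scoped BigOperators
open Metric Set

set_option synthInstance.maxHeartbeats 1000000
set_option maxHeartbeats 1000000

noncomputable section

/-- Euclidean space ℝ⁷. -/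
abbrev E7 : Type := EuclideanSpace ℝ (Fin 7)

/-- Continuous trilinear maps (ℝ⁷)³ → ℝ with the operator norm. -/
abbrev Tri3 : Type := ContinuousMultilinearMap ℝ (fun _ : Fin 3 => E7) ℝ

/-- The subspace of alternating trilinear maps. -/
def altSubmodule : Submodule ℝ Tri3 where
  carrier := {f | ∀ v : Fin 3 → E7, ∀ i j : Fin 3, v i = v j → i ≠ j → f v = 0}
  add_mem' := by
    intro f g hf hg v i j hv hij
    simp [hf v i j hv hij, hg v i j hv hij]
  zero_mem' := by intro v i j hv hij; simp
  smul_mem' := by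
    intro c f hf v i j hv hij
    simp [hf v i j hv hij]

/-- Λ³: the normed space of alternating trilinear maps (ℝ⁷)³ → ℝ. -/
abbrev Lam3 : Type := altSubmodule

instance : NormedAddCommGroup Lam3 := inferInstance
instance : NormedSpace ℝ Lam3 := inferInstance

/-- The standard orthonormal basis vectors e₁,…,e₇ of ℝ⁷. -/
def e7 (i : Fin 7) : E7 := EuclideanSpace.single i 1

/-- A 3-form `β` is closed on `U`: it is differentiable on the interior of `U` and
the coordinate expression of `dβ = 0` holds there. -/
def Closed3FormOn (β : E7 → Lam3) (U : Set E7) : Prop :=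
  DifferentiableOn ℝ β (interior U) ∧
  ∀ x ∈ interior U, ∀ i j k l : Fin 7,
    (fderiv ℝ β x (e7 i)).1 ![e7 j, e7 k, e7 l]
      - (fderiv ℝ β x (e7 j)).1 ![e7 i, e7 k, e7 l]
      + (fderiv ℝ β x (e7 k)).1 ![e7 i, e7 j, e7 l]
      - (fderiv ℝ β x (e7 l)).1 ![e7 i, e7 j, e7 k] = 0

/-- `f` is of class `C^{l,a}` on `N`: it is `l` times continuously differentiable
within `N`, and its `l`-th derivative is `a`-Hölder on `N`. -/
def HolderOn (l : ℕ) (a : ℝ) (f : E7 → Lam3) (N : Set E7) : Prop :=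
  ContDiffOn ℝ l f N ∧
  ∃ C : ℝ, ∀ x ∈ N, ∀ y ∈ N,
    ‖iteratedFDerivWithin ℝ l f N x - iteratedFDerivWithin ℝ l f N y‖ ≤ C * ‖x - y‖ ^ a

/-- The `C^{l,a}` Hölder norm of `f` on `N`. -/
noncomputable def holderNorm (l : ℕ) (a : ℝ) (f : E7 → Lam3) (N : Set E7) : ℝ :=
  (∑ i ∈ Finset.range (l + 1), ⨆ x : N, ‖iteratedFDerivWithin ℝ i f N (x : E7)‖)
    + ⨆ q : {q : N × N // (q.1 : E7) ≠ (q.2 : E7)},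
        ‖iteratedFDerivWithin ℝ l f N (q.1.1 : E7) - iteratedFDerivWithin ℝ l f N (q.1.2 : E7)‖
          / ‖(q.1.1 : E7) - (q.1.2 : E7)‖ ^ a

/-- The Hodge Laplacian of the Euclidean metric on 3-forms, with derivatives taken
within the set `N`: `(Δβ)_{ijk} = -∑ₘ ∂ₘ² β_{ijk}`. -/
def lapW (N : Set E7) (β : E7 → Lam3) (x : E7) : Lam3 :=
  -∑ m : Fin 7, fderivWithin ℝ (fun y => fderivWithin ℝ β N y (e7 m)) N x (e7 m)

/-- `f` has vanishing `l`-jet at the origin (derivatives within `N`). -/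
def VanishingJet (l : ℕ) (f : E7 → Lam3) (N : Set E7) : Prop :=
  ∀ i ≤ l, iteratedFDerivWithin ℝ i f N 0 = 0

/-- The space of closed 3-forms of class `C^{l,a}` on `N` with vanishing `l`-jet
at the origin. -/
def GoodForm (l : ℕ) (a : ℝ) (N : Set E7) (φ : E7 → Lam3) : Prop :=
  Closed3FormOn φ N ∧ HolderOn l a φ N ∧ VanishingJet l φ N

/-- A second-order linear differential operator on 3-forms with coefficients
`A`, `B`, `C`, the derivatives being taken within `N`. -/
def Kop (A : Fin 7 → Fin 7 → E7 → (Lam3 →L[ℝ] Lam3)) (B : Fin 7 → E7 → (Lam3 →L[ℝ] Lam3))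
    (C : E7 → (Lam3 →L[ℝ] Lam3)) (N : Set E7) (β : E7 → Lam3) (x : E7) : Lam3 :=
  (∑ m : Fin 7, ∑ n : Fin 7,
      A m n x (fderivWithin ℝ (fun y => fderivWithin ℝ β N y (e7 n)) N x (e7 m)))
    + (∑ m : Fin 7, B m x (fderivWithin ℝ β N x (e7 m)))
    + C x (β x)

section Aux

variable {α : Type*}

lemma tup_one (x e : α) (j : Fin 1) :
    Function.update (fun _ : Fin 1 => x) j e = Fin.snoc (fun _ : Fin 0 => x) e := by
  funext k
  have hk : k = j := Subsingleton.elim _ _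
  rw [hk, Function.update_self, Fin.snoc_zero]

lemma tup_succ (p : ℕ) (x e : α) (j : Fin (p + 1)) :
    Function.update (fun _ : Fin (p + 2) => x) j.succ e
      = Fin.cons x (Function.update (fun _ : Fin (p + 1) => x) j e) := by
  funext k
  refine Fin.cases ?_ (fun k' => ?_) k
  · rw [Function.update_of_ne (Fin.succ_ne_zero j).symm, Fin.cons_zero]
  · rw [Fin.cons_succ]
    simp [Function.update_apply, Fin.succ_inj]

lemma tup_cons_const (p : ℕ) (x : α) :
    (fun _ : Fin (p + 1) => x) = Fin.cons x (fun _ : Fin p => x) := by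
  funext k
  refine Fin.cases ?_ (fun k' => ?_) k <;> simp

lemma tup_snoc_const (p : ℕ) (x e : α) :
    Fin.snoc (fun _ : Fin (p + 1) => x) e
      = Fin.cons (α := fun _ : Fin (p+2) => α) x (Fin.snoc (fun _ : Fin p => x) e) := by
  funext k
  refine Fin.cases ?_ (fun k' => ?_) k
  · simp [Fin.snoc]
  · simp [Fin.snoc, Fin.cons]

lemma tup_zero (p : ℕ) (x e : α) :
    Function.update (fun _ : Fin (p + 1) => x) 0 e = Fin.cons e (fun _ : Fin p => x) := by
  funext k
  refine Fin.cases ?_ (fun k' => ?_) k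
  · simp
  · rw [Fin.cons_succ, Function.update_of_ne (Fin.succ_ne_zero k')]

end Aux

lemma symAux (n : ℕ) (U : Set E7) (hU : IsOpen U) (β : E7 → Lam3)
    (hreg : ContDiffOn ℝ n β U) :
    ∀ m' : ℕ, m' + 1 ≤ n → ∀ y ∈ U, ∀ x e : E7, ∀ j : Fin (m' + 1),
      iteratedFDeriv ℝ (m' + 1) β y (Function.update (fun _ => x) j e)
        = iteratedFDeriv ℝ (m' + 1) β y (Fin.snoc (fun _ : Fin m' => x) e) := by
  intro m'
  induction m' with
  | zero =>
    intro _ y _ x e j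
    rw [tup_one]
  | succ m'' IH =>
    intro hm y hy x e j
    -- the case of a positive index
    have hsucc : ∀ y ∈ U, ∀ x e : E7, ∀ j' : Fin (m'' + 1),
        iteratedFDeriv ℝ (m'' + 2) β y (Function.update (fun _ => x) j'.succ e)
          = iteratedFDeriv ℝ (m'' + 2) β y (Fin.snoc (fun _ : Fin (m'' + 1) => x) e) := by
      intro y hy x e j'
      rw [tup_succ, tup_snoc_const]
      rw [iteratedFDeriv_succ_apply_left, iteratedFDeriv_succ_apply_left]
      rw [Fin.cons_zero, Fin.cons_zero, Fin.tail_cons, Fin.tail_cons]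
      set g : E7 → (ContinuousMultilinearMap ℝ (fun _ : Fin (m'' + 1) => E7) Lam3) :=
        iteratedFDeriv ℝ (m'' + 1) β with hg
      have hgd : DifferentiableAt ℝ g y := by
        have : ContDiffAt ℝ 1 g y := by
          apply (hreg.contDiffAt (hU.mem_nhds hy)).iteratedFDeriv_right
          have h' : (1 + (m'' + 1) : ℕ) ≤ n := by omega
          exact_mod_cast h'
        exact this.differentiableAt one_ne_zero
      set w₁ : Fin (m'' + 1) → E7 := Function.update (fun _ => x) j' e with hw₁
      set w₂ : Fin (m'' + 1) → E7 := Fin.snoc (fun _ : Fin m'' => x) e with hw₂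
      set Φ₁ := ContinuousMultilinearMap.apply ℝ (fun _ : Fin (m'' + 1) => E7) Lam3 w₁ with hΦ₁
      set Φ₂ := ContinuousMultilinearMap.apply ℝ (fun _ : Fin (m'' + 1) => E7) Lam3 w₂ with hΦ₂
      have h₁ : fderiv ℝ (fun z => Φ₁ (g z)) y = Φ₁.comp (fderiv ℝ g y) :=
        (Φ₁.hasFDerivAt.comp y hgd.hasFDerivAt).fderiv
      have h₂ : fderiv ℝ (fun z => Φ₂ (g z)) y = Φ₂.comp (fderiv ℝ g y) :=
        (Φ₂.hasFDerivAt.comp y hgd.hasFDerivAt).fderiv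
      have heq : (fun z => Φ₁ (g z)) =ᶠ[nhds y] (fun z => Φ₂ (g z)) := by
        filter_upwards [hU.mem_nhds hy] with z hz
        exact IH (le_trans (by omega) hm) z hz x e j'
      have hfd := heq.fderiv_eq (𝕜 := ℝ)
      rw [h₁, h₂] at hfd
      have h3 : Φ₁ (fderiv ℝ g y x) = Φ₂ (fderiv ℝ g y x) := by
        have := congrArg (fun L : E7 →L[ℝ] Lam3 => L x) hfd
        simpa using this
      exact h3
    -- swap of the first two arguments via symmetry of the second derivative
    have key : ∀ a : E7, ∀ u : Fin (m'' + 1) → E7,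
        iteratedFDeriv ℝ (m'' + 2) β y (Fin.cons a u)
          = fderiv ℝ (fderiv ℝ (iteratedFDeriv ℝ m'' β)) y a (u 0) (Fin.tail u) := by
      intro a u
      rw [iteratedFDeriv_succ_apply_left, Fin.cons_zero, Fin.tail_cons]
      rw [iteratedFDeriv_succ_eq_comp_left, LinearIsometryEquiv.comp_fderiv]
      simp
    have hsymm : IsSymmSndFDerivAt ℝ (iteratedFDeriv ℝ m'' β) y := by
      have hm2 : (2 + m'' : ℕ) ≤ n := by omega
      refine (ContDiffAt.iteratedFDeriv_right (m := 2)
        (hreg.contDiffAt (hU.mem_nhds hy)) ?_).isSymmSndFDerivAt (by simp)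
      exact_mod_cast hm2
    have swap : ∀ a b : E7, ∀ v : Fin m'' → E7,
        iteratedFDeriv ℝ (m'' + 2) β y (Fin.cons a (Fin.cons b v))
          = iteratedFDeriv ℝ (m'' + 2) β y (Fin.cons b (Fin.cons a v)) := by
      intro a b v
      rw [key a (Fin.cons b v), key b (Fin.cons a v), Fin.cons_zero, Fin.cons_zero,
        Fin.tail_cons, Fin.tail_cons, hsymm.eq]
    refine Fin.cases ?_ (fun j' => hsucc y hy x e j') j
    have e1 : Function.update (fun _ : Fin (m'' + 2) => x) 0 e
        = Fin.cons e (Fin.cons x (fun _ : Fin m'' => x)) := by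
      rw [tup_zero]
      exact congrArg (fun v : Fin (m'' + 1) → E7 => Fin.cons (α := fun _ : Fin (m'' + 2) => E7) e v) (tup_cons_const m'' x)
    have e2 : Function.update (fun _ : Fin (m'' + 2) => x) (Fin.succ 0) e
        = Fin.cons x (Fin.cons e (fun _ : Fin m'' => x)) := by
      rw [tup_succ]
      exact congrArg (fun v : Fin (m'' + 1) → E7 => Fin.cons (α := fun _ : Fin (m'' + 2) => E7) x v) (tup_zero m'' x e)
    rw [e1, swap, ← e2]
    exact hsucc y hy x e 0

/-- evaluation functional on `E7 →L[ℝ] Lam3` -/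
def evA (d : Fin 7) (w : Fin 3 → E7) : (E7 →L[ℝ] Lam3) →L[ℝ] ℝ :=
  (ContinuousMultilinearMap.apply ℝ (fun _ : Fin 3 => E7) ℝ w).comp
    ((altSubmodule.subtypeL).comp (ContinuousLinearMap.apply ℝ Lam3 (e7 d)))

lemma evA_apply (d : Fin 7) (w : Fin 3 → E7) (T : E7 →L[ℝ] Lam3) :
    evA d w T = (T (e7 d)).1 w := rfl

lemma keyAux (n : ℕ) (U : Set E7) (hU : IsOpen U) (h0 : (0 : E7) ∈ U) (β : E7 → Lam3)
    (hreg : ContDiffOn ℝ n β U) (hclosed : Closed3FormOn β U) :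
    ∀ m' : ℕ, m' + 1 ≤ n → ∀ xs : Fin m' → E7, ∀ i j k l : Fin 7,
      (iteratedFDeriv ℝ (m' + 1) β 0 (Fin.snoc xs (e7 i))).1 ![e7 j, e7 k, e7 l]
        - (iteratedFDeriv ℝ (m' + 1) β 0 (Fin.snoc xs (e7 j))).1 ![e7 i, e7 k, e7 l]
        + (iteratedFDeriv ℝ (m' + 1) β 0 (Fin.snoc xs (e7 k))).1 ![e7 i, e7 j, e7 l]
        - (iteratedFDeriv ℝ (m' + 1) β 0 (Fin.snoc xs (e7 l))).1 ![e7 i, e7 j, e7 k] = 0 := by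
  intro m' hm xs i j k l
  set Ψ : (E7 →L[ℝ] Lam3) →L[ℝ] ℝ :=
    evA i ![e7 j, e7 k, e7 l] - evA j ![e7 i, e7 k, e7 l]
      + evA k ![e7 i, e7 j, e7 l] - evA l ![e7 i, e7 j, e7 k] with hΨ
  have hzero : ∀ y ∈ U, (⇑Ψ ∘ (fun z => fderiv ℝ β z)) y = 0 := by
    intro y hy
    have := hclosed.2 y (by rwa [hU.interior_eq]) i j k l
    simpa [hΨ, evA_apply, ContinuousLinearMap.sub_apply, ContinuousLinearMap.add_apply]
      using this
  have hH : ContDiffOn ℝ m' (fun z => fderiv ℝ β z) U := by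
    apply hreg.fderiv_of_isOpen hU
    have h' : (m' + 1 : ℕ) ≤ n := hm
    exact_mod_cast h'
  have hcomp : iteratedFDerivWithin ℝ m' (⇑Ψ ∘ (fun z => fderiv ℝ β z)) U 0
      = Ψ.compContinuousMultilinearMap
          (iteratedFDerivWithin ℝ m' (fun z => fderiv ℝ β z) U 0) :=
    Ψ.iteratedFDerivWithin_comp_left (hH 0 h0) hU.uniqueDiffOn h0 le_rfl
  have hzero2 : iteratedFDerivWithin ℝ m' (⇑Ψ ∘ (fun z => fderiv ℝ β z)) U 0 = 0 := by
    rw [iteratedFDerivWithin_congr (f := fun _ => (0 : ℝ)) hzero h0]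
    simp
  have h5 : Ψ.compContinuousMultilinearMap
      (iteratedFDerivWithin ℝ m' (fun z => fderiv ℝ β z) U 0) = 0 := by
    rw [← hcomp]; exact hzero2
  have hW : iteratedFDerivWithin ℝ m' (fun z => fderiv ℝ β z) U 0
      = iteratedFDeriv ℝ m' (fun z => fderiv ℝ β z) 0 :=
    iteratedFDerivWithin_of_isOpen m' hU h0
  rw [hW] at h5
  have h6 : Ψ (iteratedFDeriv ℝ m' (fun z => fderiv ℝ β z) 0 xs) = 0 := by
    have := congrArg (fun T : ContinuousMultilinearMap ℝ (fun _ : Fin m' => E7) ℝ => T xs) h5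
    simpa using this
  have hsucc : ∀ d : Fin 7, iteratedFDeriv ℝ (m' + 1) β 0 (Fin.snoc xs (e7 d))
      = iteratedFDeriv ℝ m' (fun z => fderiv ℝ β z) 0 xs (e7 d) := by
    intro d
    rw [iteratedFDeriv_succ_apply_right]
    simp
  rw [hsucc i, hsucc j, hsucc k, hsucc l]
  simpa [hΨ, evA_apply, ContinuousLinearMap.sub_apply, ContinuousLinearMap.add_apply]
    using h6

/-- If `β` is an `n` times continuously differentiable closed 3-form
on an open set `U ∋ 0`, then its `n`-th Taylor polynomial at the origin,
`P_n β(x) = ∑_{i=0}^n (1/i!) (Dⁱβ(0))(x,…,x)`, is a closed 3-form on all of ℝ⁷. -/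
theorem stmt6 (n : ℕ) (hn : 1 ≤ n) (U : Set E7) (hU : IsOpen U) (h0 : (0 : E7) ∈ U)
    (β : E7 → Lam3) (hreg : ContDiffOn ℝ n β U) (hclosed : Closed3FormOn β U) :
    Closed3FormOn
      (fun x : E7 => ∑ i ∈ Finset.range (n + 1),
        ((i.factorial : ℝ))⁻¹ • iteratedFDeriv ℝ i β 0 (fun _ => x))
      Set.univ := by
  classical
  set P : E7 → Lam3 := fun x : E7 => ∑ i ∈ Finset.range (n + 1),
      ((i.factorial : ℝ))⁻¹ • iteratedFDeriv ℝ i β 0 (fun _ => x) with hPdef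
  set L : E7 → (E7 →L[ℝ] Lam3) := fun x => ∑ i ∈ Finset.range (n + 1),
      ((i.factorial : ℝ))⁻¹ •
        (((iteratedFDeriv ℝ i β 0).linearDeriv (fun _ => x)).comp
          (ContinuousLinearMap.pi fun _ : Fin i => ContinuousLinearMap.id ℝ E7)) with hLdef
  have hterm : ∀ (i : ℕ) (x : E7),
      HasFDerivAt (fun x : E7 => iteratedFDeriv ℝ i β 0 (fun _ => x))
        (((iteratedFDeriv ℝ i β 0).linearDeriv (fun _ => x)).comp
          (ContinuousLinearMap.pi fun _ : Fin i => ContinuousLinearMap.id ℝ E7)) x := by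
    intro i x
    exact ((iteratedFDeriv ℝ i β 0).hasFDerivAt (fun _ => x)).comp x
      (hasFDerivAt_pi.2 fun _ => hasFDerivAt_id x)
  have hP : ∀ x : E7, HasFDerivAt P (L x) x := by
    intro x
    exact HasFDerivAt.fun_sum fun i _ => (hterm i x).const_smul ((i.factorial : ℝ))⁻¹
  have hLd : ∀ (x : E7) (d : Fin 7), fderiv ℝ P x (e7 d)
      = ∑ i' ∈ Finset.range n, ((i'.factorial : ℝ))⁻¹ •
          iteratedFDeriv ℝ (i' + 1) β 0 (Fin.snoc (fun _ : Fin i' => x) (e7 d)) := by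
    intro x d
    rw [(hP x).fderiv]
    rw [hLdef]
    simp only [ContinuousLinearMap.sum_apply, ContinuousLinearMap.smul_apply,
      ContinuousLinearMap.comp_apply, ContinuousLinearMap.pi_apply,
      ContinuousLinearMap.id_apply, ContinuousMultilinearMap.linearDeriv_apply]
    rw [Finset.sum_range_succ']
    simp only [Nat.factorial_zero, Nat.cast_one, inv_one, Finset.univ_eq_empty,
      Finset.sum_empty, smul_zero, add_zero]
    apply Finset.sum_congr rfl
    intro i' hi'
    have hle : i' + 1 ≤ n := Finset.mem_range.1 hi'
    have hsym : ∀ r : Fin (i' + 1),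
        iteratedFDeriv ℝ (i' + 1) β 0 (Function.update (fun _ => x) r (e7 d))
          = iteratedFDeriv ℝ (i' + 1) β 0 (Fin.snoc (fun _ : Fin i' => x) (e7 d)) :=
      fun r => symAux n U hU β hreg i' hle 0 h0 x (e7 d) r
    rw [Finset.sum_congr rfl (fun r _ => hsym r), Finset.sum_const]
    rw [Finset.card_univ, Fintype.card_fin, ← Nat.cast_smul_eq_nsmul ℝ, smul_smul]
    congr 1
    rw [Nat.factorial_succ]
    have h1 : ((i' + 1 : ℕ) : ℝ) ≠ 0 := by positivity
    have h2 : ((i'.factorial : ℕ) : ℝ) ≠ 0 := by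
      exact_mod_cast i'.factorial_ne_zero
    push_cast
    field_simp
  constructor
  · intro x _
    exact (hP x).differentiableAt.differentiableWithinAt
  · intro x _ i j k l
    rw [hLd x i, hLd x j, hLd x k, hLd x l]
    have hcoe : ∀ (d : Fin 7) (w : Fin 3 → E7),
        ((∑ i' ∈ Finset.range n, ((i'.factorial : ℝ))⁻¹ •
          iteratedFDeriv ℝ (i' + 1) β 0 (Fin.snoc (fun _ : Fin i' => x) (e7 d)) : Lam3)).1 w
        = ∑ i' ∈ Finset.range n, ((i'.factorial : ℝ))⁻¹ *
            ((iteratedFDeriv ℝ (i' + 1) β 0 (Fin.snoc (fun _ : Fin i' => x) (e7 d))).1 w) := by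
      intro d w
      rw [AddSubmonoidClass.coe_finset_sum]
      rw [ContinuousMultilinearMap.sum_apply]
      apply Finset.sum_congr rfl
      intro i' _
      rw [SetLike.val_smul, ContinuousMultilinearMap.smul_apply, smul_eq_mul]
    rw [hcoe, hcoe, hcoe, hcoe]
    rw [← Finset.sum_sub_distrib, ← Finset.sum_add_distrib, ← Finset.sum_sub_distrib]
    apply Finset.sum_eq_zero
    intro i' hi'
    have hle : i' + 1 ≤ n := Finset.mem_range.1 hi'
    have hkey := keyAux n U hU h0 β hreg hclosed i' hle (fun _ : Fin i' => x) i j k l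
    rw [← mul_sub, ← mul_add, ← mul_sub, hkey, mul_zero]
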